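/- Let (S_t)_{t≥s} satisfy S_t = S_{t-1}·(1 + γ²/(2·ln²(S_{t-1}))) for t ≥ s+1 with S_s > 1 and γ > 0. Set C₁ = 1 + γ²/(2 ln²(S_s)). Then for all t ≥ s, ln³(S_t) ≥ ln³(S_s) + (3γ²/(2C₁))·(t - s). -/

import Mathlib

/-- Lower bound for the recursion `S_{t+1} = S_t (1 + γ²/(2 ln² S_t))` with `S_s > 1`:
for all `t ≥ s`, `ln³(S_t) ≥ ln³(S_s) + (3γ²/(2C₁)) (t - s)`,
where `C₁ = 1 + γ²/(2 ln²(S_s))`. -/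
theorem stmt_7 (S : ℕ → ℝ) (s : ℕ) (γ : ℝ) (hγ : 0 < γ) (hSs : 1 < S s)
    (hrec : ∀ t, s ≤ t → S (t + 1) = S t * (1 + γ ^ 2 / (2 * (Real.log (S t)) ^ 2))) :
    ∀ t, s ≤ t →
      (Real.log (S s)) ^ 3 +
          (3 * γ ^ 2 / (2 * (1 + γ ^ 2 / (2 * (Real.log (S s)) ^ 2)))) * ((t : ℝ) - s)
        ≤ (Real.log (S t)) ^ 3 := by
  have key : ∀ t, s ≤ t → 1 < S t ∧ S s ≤ S t := by
    intro t ht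
    induction t, ht using Nat.le_induction with
    | base => exact ⟨hSs, le_refl _⟩
    | succ n hn ih =>
      obtain ⟨h1, h2⟩ := ih
      have hlog : 0 < Real.log (S n) := Real.log_pos h1
      have hx : 0 < γ ^ 2 / (2 * (Real.log (S n)) ^ 2) := by positivity
      rw [hrec n hn]
      constructor <;> nlinarith
  intro t ht
  induction t, ht using Nat.le_induction with
  | base => simp
  | succ n hn ih =>
    obtain ⟨h1n, h2n⟩ := key n hn
    set b := Real.log (S s) with hb
    set a := Real.log (S n) with ha
    have hbpos : 0 < b := Real.log_pos hSs
    have hapos : 0 < a := Real.log_pos h1n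
    have hba : b ≤ a := Real.log_le_log (by linarith) h2n
    set x := γ ^ 2 / (2 * a ^ 2) with hx
    have hxpos : 0 < x := by positivity
    have hlog1 : Real.log (S (n + 1)) = a + Real.log (1 + x) := by
      rw [hrec n hn, Real.log_mul (by linarith) (by positivity)]
    have hlogge : x / (1 + x) ≤ Real.log (1 + x) := by
      have h := Real.log_le_sub_one_of_pos (show (0:ℝ) < 1 / (1 + x) by positivity)
      rw [one_div, Real.log_inv] at h
      have heq : (1:ℝ) / (1 + x) - 1 = -(x / (1 + x)) := by field_simp; ring
      have h' : -Real.log (1 + x) ≤ -(x / (1 + x)) := by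
        calc -Real.log (1 + x) ≤ (1 + x)⁻¹ - 1 := h
        _ = -(x / (1 + x)) := by field_simp; ring
      linarith
    have hdpos : 0 < Real.log (1 + x) := Real.log_pos (by linarith)
    have hcube : a ^ 3 + 3 * a ^ 2 * (x / (1 + x)) ≤ (Real.log (S (n + 1))) ^ 3 := by
      rw [hlog1]
      nlinarith [mul_le_mul_of_nonneg_left hlogge (by positivity : (0:ℝ) ≤ 3 * a ^ 2),
        sq_nonneg a, sq_nonneg (Real.log (1 + x)), hapos.le, hdpos.le,
        mul_nonneg hapos.le (sq_nonneg (Real.log (1 + x)))]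
    have hxle : x ≤ γ ^ 2 / (2 * b ^ 2) := by
      rw [hx]
      gcongr
    have hstep : 3 * γ ^ 2 / (2 * (1 + γ ^ 2 / (2 * b ^ 2))) ≤ 3 * a ^ 2 * (x / (1 + x)) := by
      have h3 : 3 * a ^ 2 * (x / (1 + x)) = 3 * γ ^ 2 / (2 * (1 + x)) := by
        rw [hx]; field_simp
      rw [h3]
      gcongr
    have hihn := ih
    push_cast
    push_cast at hihn
    linarith
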